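/- Assume γ ≡ 0 and that η is a deterministic measurable function η:[0,T]→(0,∞) satisfying ∫_0^T η_s^{1-q} ds < ∞, ∫_0^T η_s^2 ds < ∞ and η_T < ∞. Then for every initial value ξ ∈ ℝ the deterministic control x_t = ξ·(∫_t^T η_s^{1-q} ds)/(∫_0^T η_s^{1-q} ds) is admissible and optimal: J(x) ≤ J(y) for every admissible control y ∈ A_0(ξ), and J(x) = |ξ|^p·(∫_0^T η_s^{1-q} ds)^{1-p}. -/

import Mathlib

open MeasureTheory Set
open scoped ENNReal Classical

noncomputable section

/-- The cost functional `J(x) = E[∫_0^T (η_t |u_t|^p + γ_t |x_t|^p) dt]`, valued in `[0,∞]`,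
where `u` is the pathwise derivative of the control `x`. -/
def cost {Ω : Type*} [MeasurableSpace Ω] (P : Measure Ω) (T p : ℝ)
    (η γ : ℝ → Ω → ℝ) (x u : ℝ → Ω → ℝ) : ℝ≥0∞ :=
  ∫⁻ ω, (∫⁻ t in Set.Ioc (0 : ℝ) T,
    ENNReal.ofReal (η t ω * |u t ω| ^ p + γ t ω * |x t ω| ^ p)) ∂P

/-- `x` is a control with initial value `ξ` and (pathwise) derivative `u`:
`x` and `u` are progressively measurable, the paths of `x` are absolutely continuous with
`x_t = ξ + ∫_0^t u_s ds` on `[0,T]`. -/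
def IsControl {Ω : Type*} {m0 : MeasurableSpace Ω} (ℱ : Filtration ℝ m0)
    (T ξ : ℝ) (x u : ℝ → Ω → ℝ) : Prop :=
  ProgMeasurable ℱ u ∧ ProgMeasurable ℱ x ∧
  (∀ ω, IntegrableOn (fun s => u s ω) (Set.Icc 0 T)) ∧
  (∀ ω, ∀ t ∈ Set.Icc (0 : ℝ) T, x t ω = ξ + ∫ s in (0 : ℝ)..t, u s ω)

/-- An admissible control: a control with initial value `ξ` satisfying `x_T = 0` a.s. -/
def IsAdmissible {Ω : Type*} {m0 : MeasurableSpace Ω} (ℱ : Filtration ℝ m0)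
    (P : Measure Ω) (T ξ : ℝ) (x u : ℝ → Ω → ℝ) : Prop :=
  IsControl ℱ T ξ x u ∧ ∀ᵐ ω ∂P, x T ω = 0


lemma measurable_primitive_to {f : ℝ → ℝ} (hf : Measurable f) (T : ℝ) :
    Measurable fun t => ∫ s in t..T, f s := by
  have key : ∀ (S : Set (ℝ × ℝ)), MeasurableSet S →
      Measurable fun t : ℝ => ∫ s : ℝ, S.indicator (fun p : ℝ × ℝ => f p.2) (t, s) := by
    intro S hS
    exact (((hf.comp measurable_snd).indicator hS).stronglyMeasurable.integral_prod_right').measurable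
  have h1 : Measurable fun t : ℝ => ∫ s in Ioc t T, f s := by
    have e : (fun t : ℝ => ∫ s in Ioc t T, f s) = fun t : ℝ =>
        ∫ s : ℝ, ({q : ℝ × ℝ | q.1 < q.2 ∧ q.2 ≤ T}).indicator (fun p : ℝ × ℝ => f p.2) (t, s) := by
      funext t
      rw [← integral_indicator measurableSet_Ioc]
      congr 1
    rw [e]
    exact key _ ((measurableSet_lt measurable_fst measurable_snd).inter
      (measurable_snd measurableSet_Iic))
  have h2 : Measurable fun t : ℝ => ∫ s in Ioc T t, f s := by
    have e : (fun t : ℝ => ∫ s in Ioc T t, f s) = fun t : ℝ =>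
        ∫ s : ℝ, ({q : ℝ × ℝ | T < q.2 ∧ q.2 ≤ q.1}).indicator (fun p : ℝ × ℝ => f p.2) (t, s) := by
      funext t
      rw [← integral_indicator measurableSet_Ioc]
      congr 1
    rw [e]
    exact key _ ((measurable_snd measurableSet_Ioi).inter
      (measurableSet_le measurable_snd measurable_fst))
  exact (h1.sub h2 : Measurable fun t => (∫ s in Ioc t T, f s) - ∫ s in Ioc T t, f s)

lemma progMeasurable_det {Ω : Type*} {m0 : MeasurableSpace Ω} (ℱ : Filtration ℝ m0)
    {f : ℝ → ℝ} (hf : Measurable f) : ProgMeasurable ℱ (fun t (_ : Ω) => f t) := fun _ =>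
  (hf.comp (measurable_subtype_coe.comp measurable_fst)).stronglyMeasurable

/-- with `γ ≡ 0` and `η` a deterministic measurable positive function with
`∫_0^T η_s^{1-q} ds < ∞` and `∫_0^T η_s^2 ds < ∞`, for every `ξ ∈ ℝ` the deterministic
control `x_t = ξ·(∫_t^T η_s^{1-q} ds)/(∫_0^T η_s^{1-q} ds)` is admissible and optimal, with
`J(x) = |ξ|^p·(∫_0^T η_s^{1-q} ds)^{1-p}`. -/
theorem optimal_control_deterministic_eta
    {Ω : Type*} {m0 : MeasurableSpace Ω} (P : Measure Ω) [IsProbabilityMeasure P]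
    (ℱ : Filtration ℝ m0) (T p q : ℝ) (hT : 0 < T) (hp : 1 < p) (hq : q = p / (p - 1))
    (η : ℝ → ℝ) (hηmeas : Measurable η)
    (hpos : ∀ s ∈ Set.Icc (0 : ℝ) T, 0 < η s)
    (γ : ℝ → Ω → ℝ) (hγ0 : ∀ t ω, γ t ω = 0)
    (hηq : IntegrableOn (fun s => η s ^ (1 - q)) (Set.Icc 0 T))
    (hη2 : IntegrableOn (fun s => (η s) ^ 2) (Set.Icc 0 T))
    (ξ : ℝ) (x u : ℝ → Ω → ℝ)
    (hxdef : ∀ t ω, x t ω = ξ * (∫ s in t..T, η s ^ (1 - q)) /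
      ∫ s in (0 : ℝ)..T, η s ^ (1 - q))
    (hudef : ∀ t ω, u t ω = -(ξ * η t ^ (1 - q) / ∫ s in (0 : ℝ)..T, η s ^ (1 - q))) :
    IsAdmissible ℱ P T ξ x u ∧
    (∀ y w, IsAdmissible ℱ P T ξ y w →
      cost P T p (fun t _ => η t) γ x u ≤ cost P T p (fun t _ => η t) γ y w) ∧
    cost P T p (fun t _ => η t) γ x u =
      ENNReal.ofReal (|ξ| ^ p * (∫ s in (0 : ℝ)..T, η s ^ (1 - q)) ^ (1 - p)) := by
  set I := ∫ s in (0 : ℝ)..T, η s ^ (1 - q) with hIdef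
  -- basic exponent facts
  have hp0 : (0:ℝ) < p := lt_trans one_pos hp
  have hp1 : (0:ℝ) < p - 1 := sub_pos.2 hp
  have hq1 : 1 < q := by
    rw [hq, lt_div_iff₀ hp1]; linarith
  have hq0 : (0:ℝ) < q := lt_trans one_pos hq1
  have hpq : p.HolderConjugate q := (Real.holderConjugate_iff_eq_conjExponent hp).2 hq
  have hqp : q * (p - 1) = p := by rw [hq]; field_simp
  have e1 : (1 - q) * p = -q := by linear_combination -hqp
  have e2 : p / q = p - 1 := by
    rw [hq, div_div_eq_mul_div, mul_comm, mul_div_assoc, div_self hp0.ne', mul_one]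
  have e3 : -(1/p) * q = 1 - q := by
    have h2 : q * p - q = p := by linear_combination hqp
    field_simp
    linarith [h2]
  have e4 : 1/p * p = 1 := one_div_mul_cancel hp0.ne'
  -- integrability of η^{1-q} on subintervals
  have hIoc : IntegrableOn (fun s => η s ^ (1 - q)) (Ioc 0 T) :=
    hηq.mono_set Set.Ioc_subset_Icc_self
  have hInt : ∀ a ∈ Icc (0:ℝ) T, ∀ b ∈ Icc (0:ℝ) T,
      IntervalIntegrable (fun s => η s ^ (1 - q)) volume a b := fun a ha b hb =>
    (hηq.mono_set (Set.uIcc_subset_Icc ha hb)).intervalIntegrable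
  have hT' : T ∈ Icc (0:ℝ) T := ⟨hT.le, le_refl T⟩
  have h0' : (0:ℝ) ∈ Icc (0:ℝ) T := ⟨le_refl 0, hT.le⟩
  have hI : 0 < I := by
    rw [hIdef]
    exact intervalIntegral.intervalIntegral_pos_of_pos_on (hInt 0 h0' T hT')
      (fun s hs => Real.rpow_pos_of_pos (hpos s ⟨hs.1.le, hs.2.le⟩) _) hT
  -- replace x and u by their explicit formulas
  have hue : u = fun t (_ : Ω) => -(ξ * η t ^ (1 - q) / I) := by
    funext t ω; exact hudef t ω
  have hxe : x = fun t (_ : Ω) => ξ * (∫ s in t..T, η s ^ (1 - q)) / I := by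
    funext t ω; exact hxdef t ω
  subst hue hxe
  -- admissibility
  have hadm : IsAdmissible ℱ P T ξ
      (fun t (_ : Ω) => ξ * (∫ s in t..T, η s ^ (1 - q)) / I)
      (fun t (_ : Ω) => -(ξ * η t ^ (1 - q) / I)) := by
    refine ⟨⟨?_, ?_, ?_, ?_⟩, ?_⟩
    · exact progMeasurable_det ℱ
        (((measurable_const.mul (hηmeas.pow measurable_const)).div_const I).neg)
    · exact progMeasurable_det ℱ
        ((measurable_const.mul (measurable_primitive_to (hηmeas.pow measurable_const) T)).div_const I)
    · intro ω
      have e : (fun s => -(ξ * η s ^ (1 - q) / I)) = fun s => (-(ξ/I)) * (η s ^ (1 - q)) := by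
        funext s; ring
      rw [e]
      exact hηq.const_mul _
    · intro ω t ht
      have h1 : ∫ s in (0:ℝ)..t, -(ξ * η s ^ (1 - q) / I)
          = (-(ξ/I)) * ∫ s in (0:ℝ)..t, η s ^ (1 - q) := by
        rw [← intervalIntegral.integral_const_mul]
        exact intervalIntegral.integral_congr (fun s _ => by ring)
      have h2 : (∫ s in (0:ℝ)..t, η s ^ (1 - q)) + ∫ s in t..T, η s ^ (1 - q) = I := by
        rw [hIdef]
        exact intervalIntegral.integral_add_adjacent_intervals (hInt 0 h0' t ht) (hInt t ht T hT')
      rw [h1]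
      field_simp
      linear_combination ξ * h2
    · refine Filter.Eventually.of_forall (fun ω => ?_)
      simp [intervalIntegral.integral_same]
  -- cost of the candidate control
  have hcost : cost P T p (fun t _ => η t) γ
      (fun t (_ : Ω) => ξ * (∫ s in t..T, η s ^ (1 - q)) / I)
      (fun t (_ : Ω) => -(ξ * η t ^ (1 - q) / I))
      = ENNReal.ofReal (|ξ| ^ p * I ^ (1 - p)) := by
    have hinner : ∀ ω : Ω, (∫⁻ t in Ioc (0:ℝ) T,
        ENNReal.ofReal (η t * |(-(ξ * η t ^ (1 - q) / I))| ^ p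
          + γ t ω * |ξ * (∫ s in t..T, η s ^ (1 - q)) / I| ^ p))
        = ENNReal.ofReal (|ξ| ^ p * I ^ (1 - p)) := by
      intro ω
      have hcg : (∫⁻ t in Ioc (0:ℝ) T,
          ENNReal.ofReal (η t * |(-(ξ * η t ^ (1 - q) / I))| ^ p
            + γ t ω * |ξ * (∫ s in t..T, η s ^ (1 - q)) / I| ^ p))
          = ∫⁻ t in Ioc (0:ℝ) T, ENNReal.ofReal ((|ξ| ^ p / I ^ p) * η t ^ (1 - q)) := by
        refine setLIntegral_congr_fun measurableSet_Ioc (fun t ht => ?_)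
        simp only [hγ0, zero_mul, add_zero]
        congr 1
        have ht0 : 0 < η t := hpos t ⟨ht.1.le, ht.2⟩
        have h0 : 0 < η t ^ (1 - q) := Real.rpow_pos_of_pos ht0 _
        rw [abs_neg, abs_div, abs_mul, abs_of_pos h0, abs_of_pos hI]
        rw [Real.div_rpow (by positivity) hI.le, Real.mul_rpow (abs_nonneg _) h0.le]
        rw [← Real.rpow_mul ht0.le, e1]
        rw [show (1:ℝ) - q = 1 + -q by ring, Real.rpow_add ht0, Real.rpow_one]
        ring
      rw [hcg]
      have hint : Integrable (fun t => (|ξ| ^ p / I ^ p) * η t ^ (1 - q))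
          (volume.restrict (Ioc 0 T)) := hIoc.const_mul _
      have hnn : 0 ≤ᵐ[volume.restrict (Ioc 0 T)]
          fun t => (|ξ| ^ p / I ^ p) * η t ^ (1 - q) := by
        refine (ae_restrict_iff' measurableSet_Ioc).2 (Filter.Eventually.of_forall fun t ht => ?_)
        have ht0 : 0 < η t := hpos t ⟨ht.1.le, ht.2⟩
        positivity
      rw [← ofReal_integral_eq_lintegral_ofReal hint hnn]
      congr 1
      rw [integral_const_mul, ← intervalIntegral.integral_of_le hT.le, ← hIdef]
      rw [Real.rpow_sub hI, Real.rpow_one]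
      ring
    rw [cost]
    simp only [hinner]
    simp [lintegral_const]
  -- value of ∫⁻ η^{1-q} over (0,T]
  have hB : (∫⁻ t in Ioc (0:ℝ) T, ENNReal.ofReal (η t ^ (1 - q))) = ENNReal.ofReal I := by
    rw [← ofReal_integral_eq_lintegral_ofReal hIoc]
    · congr 1
      rw [← intervalIntegral.integral_of_le hT.le, ← hIdef]
    · refine (ae_restrict_iff' measurableSet_Ioc).2 (Filter.Eventually.of_forall fun t ht => ?_)
      exact (Real.rpow_pos_of_pos (hpos t ⟨ht.1.le, ht.2⟩) _).le
  refine ⟨hadm, ?_, hcost⟩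
  -- optimality
  rintro y w ⟨⟨hwprog, hyprog, hwint, hyieq⟩, hyT⟩
  rw [hcost, cost]
  have hae : ∀ᵐ ω ∂P, ENNReal.ofReal (|ξ| ^ p * I ^ (1 - p)) ≤
      ∫⁻ t in Ioc (0:ℝ) T, ENNReal.ofReal ((fun t (_ : Ω) => η t) t ω * |w t ω| ^ p
        + γ t ω * |y t ω| ^ p) := by
    filter_upwards [hyT] with ω hω
    simp only [hγ0, zero_mul, add_zero]
    set A := ∫⁻ t in Ioc (0:ℝ) T, ENNReal.ofReal (η t * |w t ω| ^ p) with hA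
    have hξv : ∫ s in (0:ℝ)..T, w s ω = -ξ := by
      have := hyieq ω T hT'
      rw [hω] at this
      linarith
    have hwIoc : IntegrableOn (fun t => w t ω) (Ioc 0 T) :=
      (hwint ω).mono_set Set.Ioc_subset_Icc_self
    have hwm : AEMeasurable (fun t => w t ω) (volume.restrict (Ioc 0 T)) :=
      hwIoc.aestronglyMeasurable.aemeasurable
    have hwabs : AEMeasurable (fun t => |w t ω|) (volume.restrict (Ioc 0 T)) := by
      simpa [Real.norm_eq_abs] using hwm.norm
    have hf : AEMeasurable (fun t => ENNReal.ofReal (η t ^ (1/p) * |w t ω|))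
        (volume.restrict (Ioc 0 T)) :=
      ENNReal.measurable_ofReal.comp_aemeasurable
        (((hηmeas.pow measurable_const).aemeasurable.mul hwabs))
    have hg : AEMeasurable (fun t => ENNReal.ofReal (η t ^ (-(1/p))))
        (volume.restrict (Ioc 0 T)) :=
      (ENNReal.measurable_ofReal.comp (hηmeas.pow measurable_const)).aemeasurable
    have hHolder := ENNReal.lintegral_mul_le_Lp_mul_Lq (volume.restrict (Ioc 0 T)) hpq hf hg
    simp only [Pi.mul_apply] at hHolder
    -- identify the three integrals
    have hfg : (∫⁻ t in Ioc (0:ℝ) T,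
        ENNReal.ofReal (η t ^ (1/p) * |w t ω|) * ENNReal.ofReal (η t ^ (-(1/p))))
        = ∫⁻ t in Ioc (0:ℝ) T, ENNReal.ofReal |w t ω| := by
      refine setLIntegral_congr_fun measurableSet_Ioc (fun t ht => ?_)
      have ht0 : 0 < η t := hpos t ⟨ht.1.le, ht.2⟩
      rw [← ENNReal.ofReal_mul (by positivity)]
      congr 1
      have h1 : η t ^ (1/p) * η t ^ (-(1/p)) = 1 := by
        rw [← Real.rpow_add ht0]; norm_num
      calc η t ^ (1/p) * |w t ω| * η t ^ (-(1/p))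
          = |w t ω| * (η t ^ (1/p) * η t ^ (-(1/p))) := by ring
        _ = |w t ω| := by rw [h1, mul_one]
    have hfp : (∫⁻ t in Ioc (0:ℝ) T, ENNReal.ofReal (η t ^ (1/p) * |w t ω|) ^ p) = A := by
      refine setLIntegral_congr_fun measurableSet_Ioc (fun t ht => ?_)
      have ht0 : 0 < η t := hpos t ⟨ht.1.le, ht.2⟩
      rw [ENNReal.ofReal_rpow_of_nonneg (by positivity) hp0.le]
      congr 1
      rw [Real.mul_rpow (by positivity) (abs_nonneg _), ← Real.rpow_mul ht0.le, e4,
        Real.rpow_one]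
    have hgq : (∫⁻ t in Ioc (0:ℝ) T, ENNReal.ofReal (η t ^ (-(1/p))) ^ q)
        = ENNReal.ofReal I := by
      rw [← hB]
      refine setLIntegral_congr_fun measurableSet_Ioc (fun t ht => ?_)
      have ht0 : 0 < η t := hpos t ⟨ht.1.le, ht.2⟩
      rw [ENNReal.ofReal_rpow_of_nonneg (by positivity) hq0.le]
      congr 1
      rw [← Real.rpow_mul ht0.le, e3]
    rw [hfg, hfp, hgq] at hHolder
    -- lower bound on ∫⁻ |w|
    have hL : ENNReal.ofReal |ξ| ≤ ∫⁻ t in Ioc (0:ℝ) T, ENNReal.ofReal |w t ω| := by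
      have h2 : |∫ s in (0:ℝ)..T, w s ω| ≤ ∫ s in (0:ℝ)..T, |w s ω| :=
        intervalIntegral.abs_integral_le_integral_abs hT.le
      rw [hξv, abs_neg, intervalIntegral.integral_of_le hT.le] at h2
      calc ENNReal.ofReal |ξ| ≤ ENNReal.ofReal (∫ t in Ioc (0:ℝ) T, |w t ω|) :=
            ENNReal.ofReal_le_ofReal h2
        _ = ∫⁻ t in Ioc (0:ℝ) T, ENNReal.ofReal |w t ω| :=
            ofReal_integral_eq_lintegral_ofReal hwIoc.abs
              (Filter.Eventually.of_forall fun t => abs_nonneg _)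
    have h1' : ENNReal.ofReal |ξ| ≤ A ^ (1/p) * (ENNReal.ofReal I) ^ (1/q) :=
      le_trans hL hHolder
    set B := ENNReal.ofReal I with hBdef
    have hB0 : B ≠ 0 := (ENNReal.ofReal_pos.2 hI).ne'
    have hBt : B ≠ ⊤ := ENNReal.ofReal_ne_top
    calc ENNReal.ofReal (|ξ| ^ p * I ^ (1 - p))
        = (ENNReal.ofReal |ξ|) ^ p * B ^ (1 - p) := by
          rw [ENNReal.ofReal_mul (by positivity),
            ENNReal.ofReal_rpow_of_nonneg (abs_nonneg _) hp0.le, hBdef,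
            ENNReal.ofReal_rpow_of_pos hI]
      _ ≤ (A ^ (1/p) * B ^ (1/q)) ^ p * B ^ (1 - p) :=
          mul_le_mul_left (ENNReal.rpow_le_rpow h1' hp0.le) _
      _ = A * (B ^ (p/q) * B ^ (1 - p)) := by
          rw [ENNReal.mul_rpow_of_nonneg _ _ hp0.le, ← ENNReal.rpow_mul, ← ENNReal.rpow_mul,
            e4, ENNReal.rpow_one, show 1/q * p = p/q by ring, mul_assoc]
      _ = A := by
          rw [← ENNReal.rpow_add _ _ hB0 hBt, show p/q + (1 - p) = 0 by rw [e2]; ring,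
            ENNReal.rpow_zero, mul_one]
  calc ENNReal.ofReal (|ξ| ^ p * I ^ (1 - p))
      = ∫⁻ _ : Ω, ENNReal.ofReal (|ξ| ^ p * I ^ (1 - p)) ∂P := by
        rw [lintegral_const, measure_univ, mul_one]
    _ ≤ _ := lintegral_mono_ae hae
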